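/- Define f : [0,1] → ℓ²(ℕ²) by f(t) = Σ_{k≥1} 2^{-k} e_{k, ⌊2^k t⌋}. For every finite-dimensional subspace V of ℓ²(ℕ²) and every ε > 0, there exists a Borel set K ⊆ [0,1] with Lebesgue measure λ([0,1] \ K) ≤ ε such that the restriction of π_V ∘ f to K is piecewise ε-Lipschitz (i.e., [0,1] decomposes into finitely many intervals on each of which π_V ∘ f restricted to K is ε-Lipschitz). -/

import Mathlib

open MeasureTheory Set
open scoped ENNReal NNReal

noncomputable section

/-- The Hilbert space `ℓ²(ℕ²)` (with basis vectors `e_{k,i} = lp.single 2 (k, i) 1`). -/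
abbrev Ell2 : Type := lp (fun _ : ℕ × ℕ => ℝ) 2

/-- The map `f : [0,1] → ℓ²(ℕ²)`, `f(t) = Σ_{k ≥ 1} 2^{-k} e_{k, ⌊2^k t⌋}`. -/
def necklaceMap (t : ℝ) : Ell2 :=
  ∑' k : ℕ, ((2 : ℝ) ^ (k + 1))⁻¹ •
    lp.single 2 ((k + 1 : ℕ), ⌊(2 : ℝ) ^ (k + 1) * t⌋₊) (1 : ℝ)

instance : T2Space Ell2 := inferInstanceAs (T2Space Ell2)

namespace NecklaceAux

open Finset
open scoped RealInnerProductSpace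

/-! ### The geometric ratio `q = 2^{-1/8}` -/

def q : ℝ := Real.sqrt (Real.sqrt (Real.sqrt 2⁻¹))

lemma q_pos : 0 < q := by
  have : (0:ℝ) < 2⁻¹ := by norm_num
  simp only [q]; positivity

lemma q_pow8 : q ^ 8 = 2⁻¹ := by
  have h0 : (0:ℝ) ≤ 2⁻¹ := by norm_num
  have h1 : (0:ℝ) ≤ Real.sqrt 2⁻¹ := Real.sqrt_nonneg _
  have h2 : (0:ℝ) ≤ Real.sqrt (Real.sqrt 2⁻¹) := Real.sqrt_nonneg _
  have h : q ^ 8 = ((q ^ 2) ^ 2) ^ 2 := by ring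
  rw [h, q, Real.sq_sqrt h2, Real.sq_sqrt h1, Real.sq_sqrt h0]

lemma q_lt_one : q < 1 := by
  by_contra h
  push_neg at h
  have h8 : (1:ℝ) ≤ q ^ 8 := one_le_pow₀ h
  rw [q_pow8] at h8; norm_num at h8

lemma q_le_one : q ≤ 1 := q_lt_one.le

lemma two_pow_inv (l : ℕ) : ((2:ℝ) ^ l)⁻¹ = q ^ (8 * l) := by
  rw [pow_mul, q_pow8, inv_pow]

lemma q_pow_nonneg (n : ℕ) : 0 ≤ q ^ n := pow_nonneg q_pos.le n

lemma q_pow_le_one (n : ℕ) : q ^ n ≤ 1 := pow_le_one₀ q_pos.le q_le_one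

/-! ### Basis vectors and the projection -/

abbrev e (l i : ℕ) : Ell2 := lp.single 2 (l, i) (1 : ℝ)

lemma norm_e (l i : ℕ) : ‖e l i‖ = 1 := by
  have := lp.norm_single (p := 2) (E := fun _ : ℕ × ℕ => ℝ) (by norm_num) (l, i) (1:ℝ)
  simpa using this

variable (V : Submodule ℝ Ell2) [FiniteDimensional ℝ V]

def P : Ell2 →L[ℝ] Ell2 := V.subtypeL.comp (V.orthogonalProjectionOnto)

lemma norm_P_le (x : Ell2) : ‖P V x‖ ≤ ‖x‖ := by
  calc ‖P V x‖ = ‖V.orthogonalProjectionOnto x‖ := rfl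
    _ ≤ ‖V.orthogonalProjectionOnto‖ * ‖x‖ := (V.orthogonalProjectionOnto).le_opNorm x
    _ ≤ 1 * ‖x‖ := by gcongr; exact Submodule.orthogonalProjectionOnto_norm_le V
    _ = ‖x‖ := one_mul _

/-! ### The trace estimate -/

lemma coord_sum_le (f : Ell2) (l : ℕ) (S : Finset ℕ) :
    ∑ i ∈ S, (f (l, i)) ^ 2 ≤ ‖f‖ ^ 2 := by
  classical
  have h2 : (0:ℝ) < (2 : ℝ≥0∞).toReal := by norm_num
  have key := lp.sum_rpow_le_norm_rpow h2 f (S.image (fun i => (l, i)))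
  have himg : ∑ p ∈ S.image (fun i => (l, i)), ‖f p‖ ^ (2 : ℝ≥0∞).toReal
      = ∑ i ∈ S, ‖f (l, i)‖ ^ (2 : ℝ≥0∞).toReal := by
    rw [Finset.sum_image]
    intro a _ a' _ h
    exact ((Prod.mk.injEq _ _ _ _).mp h).2
  rw [himg] at key
  have hconv : ∀ x : ℝ, ‖x‖ ^ (2 : ℝ≥0∞).toReal = x ^ 2 := by
    intro x
    have h : (2 : ℝ≥0∞).toReal = ((2:ℕ):ℝ) := by norm_num
    rw [h, Real.rpow_natCast]
    simp [sq_abs]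
  have hconv2 : ‖f‖ ^ (2 : ℝ≥0∞).toReal = ‖f‖ ^ 2 := by
    have h : (2 : ℝ≥0∞).toReal = ((2:ℕ):ℝ) := by norm_num
    rw [h, Real.rpow_natCast]
  calc ∑ i ∈ S, (f (l, i)) ^ 2 = ∑ i ∈ S, ‖f (l, i)‖ ^ (2 : ℝ≥0∞).toReal := by
        simp_rw [hconv]
    _ ≤ ‖f‖ ^ (2 : ℝ≥0∞).toReal := key
    _ = ‖f‖ ^ 2 := hconv2

lemma trace_le (l : ℕ) (S : Finset ℕ) :
    ∑ i ∈ S, ‖P V (e l i)‖ ^ 2 ≤ (Module.finrank ℝ V : ℝ) := by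
  classical
  set b := stdOrthonormalBasis ℝ V with hb
  have hPnorm : ∀ x : Ell2, ‖P V x‖ ^ 2 = ∑ j, ⟪(b j : Ell2), x⟫ ^ 2 := by
    intro x
    have h1 : ‖P V x‖ = ‖V.orthogonalProjectionOnto x‖ := rfl
    have h2 : ‖V.orthogonalProjectionOnto x‖ = ‖b.repr (V.orthogonalProjectionOnto x)‖ :=
      (b.repr.norm_map _).symm
    have h3 : ‖b.repr (V.orthogonalProjectionOnto x)‖ ^ 2
        = ∑ j, (b.repr (V.orthogonalProjectionOnto x) j) ^ 2 := by
      rw [EuclideanSpace.norm_eq, Real.sq_sqrt (by positivity)]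
      simp [sq_abs]
    rw [h1, h2, h3]
    refine Finset.sum_congr rfl fun j _ => ?_
    rw [b.repr_apply_apply, Submodule.inner_orthogonalProjectionOnto_eq_of_mem_left]
  have hsum : ∑ i ∈ S, ‖P V (e l i)‖ ^ 2
      = ∑ j, ∑ i ∈ S, (((b j : Ell2)) (l, i)) ^ 2 := by
    rw [Finset.sum_comm]
    refine Finset.sum_congr rfl fun i _ => ?_
    rw [hPnorm]
    refine Finset.sum_congr rfl fun j _ => ?_
    congr 1
    rw [real_inner_comm, lp.inner_single_left]
    simp
  rw [hsum]
  calc ∑ j, ∑ i ∈ S, (((b j : Ell2)) (l, i)) ^ 2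
      ≤ ∑ _j : Fin (Module.finrank ℝ V), (1:ℝ) := by
        refine Finset.sum_le_sum fun j _ => ?_
        have h := coord_sum_le ((b j : Ell2)) l S
        have hn : ‖((b j : V) : Ell2)‖ = 1 := by
          rw [Submodule.norm_coe]
          exact b.orthonormal.1 j
        rw [hn] at h
        simpa using h
    _ = (Module.finrank ℝ V : ℝ) := by simp

/-! ### The series defining the necklace map -/

def F (t : ℝ) (k : ℕ) : Ell2 :=
  ((2 : ℝ) ^ (k + 1))⁻¹ • e (k + 1) ⌊(2 : ℝ) ^ (k + 1) * t⌋₊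

lemma norm_F (t : ℝ) (k : ℕ) : ‖F t k‖ = ((2:ℝ)⁻¹) ^ (k+1) := by
  rw [F, norm_smul, norm_e, mul_one, Real.norm_eq_abs, abs_of_nonneg (by positivity), inv_pow]

lemma summable_geom_aux : Summable (fun k : ℕ => ((2:ℝ)⁻¹) ^ (k+1)) := by
  have h : Summable (fun k : ℕ => ((2:ℝ)⁻¹) ^ k) :=
    summable_geometric_of_lt_one (by norm_num) (by norm_num)
  simpa [pow_succ] using h.mul_right (2:ℝ)⁻¹

lemma summable_F (t : ℝ) : Summable (F t) := by
  refine Summable.of_norm ?_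
  simpa only [norm_F] using summable_geom_aux

lemma summable_PF (t : ℝ) : Summable (fun k => P V (F t k)) := by
  refine Summable.of_norm (Summable.of_nonneg_of_le (fun k => norm_nonneg _) (fun k => ?_)
    summable_geom_aux)
  calc ‖P V (F t k)‖ ≤ ‖F t k‖ := norm_P_le V _
    _ = ((2:ℝ)⁻¹) ^ (k+1) := norm_F t k

lemma necklace_eq (t : ℝ) : necklaceMap t = ∑' k, F t k := rfl

lemma P_necklace (t : ℝ) :
    P V (necklaceMap t) = ∑' k, P V (F t k) := by
  rw [necklace_eq, ContinuousLinearMap.map_tsum _ (summable_F t)]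

lemma P_diff (s x : ℝ) :
    P V (necklaceMap x) - P V (necklaceMap s)
      = ∑' k, (P V (F x k) - P V (F s k)) := by
  rw [P_necklace, P_necklace, Summable.tsum_sub (summable_PF V x) (summable_PF V s)]



variable (V : Submodule ℝ Ell2) [FiniteDimensional ℝ V]

def Bad (l : ℕ) : Finset ℕ :=
  (Finset.range (2 ^ l)).filter (fun i => q ^ (3 * l) < ‖P V (e l i)‖)

lemma Bad_card (l : ℕ) : ((Bad V l).card : ℝ) * q ^ (6 * l) ≤ (Module.finrank ℝ V : ℝ) := by
  have h1 : ((Bad V l).card : ℝ) * q ^ (6 * l) = ∑ _i ∈ Bad V l, q ^ (6 * l) := by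
    rw [Finset.sum_const, nsmul_eq_mul]
  rw [h1]
  refine le_trans (Finset.sum_le_sum fun i hi => ?_) (trace_le V l (Bad V l))
  have hqi : q ^ (3 * l) < ‖P V (e l i)‖ := (Finset.mem_filter.mp hi).2
  calc q ^ (6 * l) = (q ^ (3 * l)) ^ 2 := by rw [← pow_mul]; ring_nf
    _ ≤ ‖P V (e l i)‖ ^ 2 := pow_le_pow_left₀ (q_pow_nonneg _) hqi.le 2

def badPart (l : ℕ) : Set ℝ :=
  ⋃ i ∈ Bad V l, Set.Ico ((i:ℝ) * ((2:ℝ) ^ l)⁻¹) (((i:ℝ) + 1) * ((2:ℝ) ^ l)⁻¹)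

def gridPart (l : ℕ) : Set ℝ :=
  ⋃ i ∈ Finset.range (2 ^ l + 1), Metric.closedBall ((i:ℝ) * ((2:ℝ) ^ l)⁻¹) (q ^ (10 * l))

def R (l : ℕ) : Set ℝ := badPart V l ∪ gridPart l

lemma R_meas (l : ℕ) : MeasurableSet (R V l) := by
  refine MeasurableSet.union ?_ ?_
  · exact MeasurableSet.biUnion (Set.to_countable _) (fun i _ => measurableSet_Ico)
  · exact MeasurableSet.biUnion (Set.to_countable _) (fun i _ => measurableSet_closedBall)

lemma badPart_vol (l : ℕ) :
    volume (badPart V l) ≤ ENNReal.ofReal ((Module.finrank ℝ V : ℝ) * q ^ (2 * l)) := by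
  refine le_trans (measure_biUnion_finset_le _ _) ?_
  have hvol : ∀ i : ℕ, volume (Set.Ico ((i:ℝ) * ((2:ℝ) ^ l)⁻¹)
      (((i:ℝ) + 1) * ((2:ℝ) ^ l)⁻¹)) = ENNReal.ofReal (((2:ℝ) ^ l)⁻¹) := by
    intro i
    rw [Real.volume_Ico]
    congr 1
    ring
  simp_rw [hvol]
  rw [Finset.sum_const, nsmul_eq_mul,
    ← ENNReal.ofReal_natCast, ← ENNReal.ofReal_mul (by positivity)]
  apply ENNReal.ofReal_le_ofReal
  calc ((Bad V l).card : ℝ) * ((2:ℝ) ^ l)⁻¹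
      = ((Bad V l).card : ℝ) * q ^ (6 * l) * q ^ (2 * l) := by
        rw [two_pow_inv, mul_assoc, ← pow_add]
        congr 2
        omega
    _ ≤ (Module.finrank ℝ V : ℝ) * q ^ (2 * l) :=
        mul_le_mul_of_nonneg_right (Bad_card V l) (q_pow_nonneg _)

lemma gridPart_vol (l : ℕ) :
    volume (gridPart l) ≤ ENNReal.ofReal (4 * q ^ (2 * l)) := by
  refine le_trans (measure_biUnion_finset_le _ _) ?_
  simp_rw [Real.volume_closedBall]
  rw [Finset.sum_const, nsmul_eq_mul, Finset.card_range,
    ← ENNReal.ofReal_natCast, ← ENNReal.ofReal_mul (by positivity)]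
  apply ENNReal.ofReal_le_ofReal
  have hcount : ((2 ^ l + 1 : ℕ) : ℝ) ≤ 2 * 2 ^ l := by
    push_cast
    have : (1:ℝ) ≤ 2 ^ l := one_le_pow₀ (by norm_num)
    linarith
  have hpow : (2:ℝ) ^ l * q ^ (10 * l) = q ^ (2 * l) := by
    have h1 : q ^ (10 * l) = q ^ (8 * l) * q ^ (2 * l) := by
      rw [← pow_add]; congr 1; omega
    rw [h1, ← two_pow_inv]
    field_simp
  calc ((2 ^ l + 1 : ℕ) : ℝ) * (2 * q ^ (10 * l))
      ≤ (2 * 2 ^ l) * (2 * q ^ (10 * l)) :=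
        mul_le_mul_of_nonneg_right hcount (by nlinarith [q_pow_nonneg (10*l)])
    _ = 4 * (2 ^ l * q ^ (10 * l)) := by ring
    _ = 4 * q ^ (2 * l) := by rw [hpow]

lemma R_vol (l : ℕ) :
    volume (R V l) ≤ ENNReal.ofReal (((Module.finrank ℝ V : ℝ) + 4) * q ^ (2 * l)) := by
  calc volume (R V l) ≤ _ + _ := measure_union_le _ _
    _ ≤ ENNReal.ofReal ((Module.finrank ℝ V : ℝ) * q ^ (2 * l))
        + ENNReal.ofReal (4 * q ^ (2 * l)) := add_le_add (badPart_vol V l) (gridPart_vol l)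
    _ = ENNReal.ofReal (((Module.finrank ℝ V : ℝ) + 4) * q ^ (2 * l)) := by
        rw [← ENNReal.ofReal_add (mul_nonneg (Nat.cast_nonneg _) (q_pow_nonneg _))
          (mul_nonneg (by norm_num) (q_pow_nonneg _))]
        congr 1
        ring

def Uset (N : ℕ) : Set ℝ := ⋃ m : ℕ, R V (N + 1 + m)

lemma Uset_meas (N : ℕ) : MeasurableSet (Uset V N) :=
  MeasurableSet.iUnion fun _ => R_meas V _

def Kset (N : ℕ) : Set ℝ := Set.Icc 0 1 \ Uset V N

lemma Kset_meas (N : ℕ) : MeasurableSet (Kset V N) :=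
  measurableSet_Icc.diff (Uset_meas V N)

lemma Uset_vol (N : ℕ) :
    volume (Uset V N) ≤
      ENNReal.ofReal (((Module.finrank ℝ V : ℝ) + 4) * (q ^ (2 * (N + 1)) * (1 - q ^ 2)⁻¹)) := by
  set D : ℝ := (Module.finrank ℝ V : ℝ) with hD
  have hD0 : (0:ℝ) ≤ D := Nat.cast_nonneg _
  have hq2 : q ^ 2 < 1 := by nlinarith [q_lt_one, q_pos]
  have harith : ∀ m : ℕ, ((D + 4) * q ^ (2 * (N + 1))) * (q ^ 2) ^ m
      = (D + 4) * q ^ (2 * (N + 1 + m)) := by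
    intro m
    rw [mul_assoc, ← pow_mul, ← pow_add]
    congr 2
    ring
  have hsummable : Summable (fun m : ℕ => (D + 4) * q ^ (2 * (N + 1 + m))) := by
    have h : Summable (fun m : ℕ => ((D + 4) * q ^ (2 * (N + 1))) * (q ^ 2) ^ m) :=
      (summable_geometric_of_lt_one (by nlinarith [q_pos]) hq2).mul_left _
    exact h.congr harith
  calc volume (Uset V N) ≤ ∑' m : ℕ, volume (R V (N + 1 + m)) := measure_iUnion_le _
    _ ≤ ∑' m : ℕ, ENNReal.ofReal ((D + 4) * q ^ (2 * (N + 1 + m))) :=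
        ENNReal.tsum_le_tsum fun m => R_vol V _
    _ = ENNReal.ofReal (∑' m : ℕ, (D + 4) * q ^ (2 * (N + 1 + m))) := by
        rw [ENNReal.ofReal_tsum_of_nonneg (fun m => mul_nonneg (by linarith) (q_pow_nonneg _)) hsummable]
    _ ≤ _ := by
        apply ENNReal.ofReal_le_ofReal
        have h : HasSum (fun m : ℕ => ((D + 4) * q ^ (2 * (N + 1))) * (q ^ 2) ^ m)
            (((D + 4) * q ^ (2 * (N + 1))) * (1 - q ^ 2)⁻¹) :=
          (hasSum_geometric_of_lt_one (by nlinarith [q_pos]) hq2).mul_left _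
        rw [funext harith] at h
        rw [h.tsum_eq, mul_assoc]



variable (V : Submodule ℝ Ell2) [FiniteDimensional ℝ V]

lemma notR_of_mem_Kset {N : ℕ} {y : ℝ} (hy : y ∈ Kset V N) :
    ∀ l, N < l → y ∉ R V l := by
  intro l hl hyR
  refine hy.2 ?_
  refine Set.mem_iUnion.mpr ⟨l - (N + 1), ?_⟩
  have h : N + 1 + (l - (N + 1)) = l := by omega
  rw [h]
  exact hyR

lemma grid_sep {N : ℕ} {y : ℝ} (hy : y ∈ Kset V N) :
    ∀ l, N < l → ∀ i : ℕ, i ≤ 2 ^ l → q ^ (10 * l) < |y - (i:ℝ) * ((2:ℝ) ^ l)⁻¹| := by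
  intro l hl i hi
  by_contra h
  push_neg at h
  refine notR_of_mem_Kset V hy l hl (Set.mem_union_right _ ?_)
  have hmem : i ∈ Finset.range (2 ^ l + 1) := Finset.mem_range.mpr (by omega)
  refine Set.mem_biUnion hmem ?_
  rw [Metric.mem_closedBall, Real.dist_eq]
  exact h

lemma Kset_lt_one {N : ℕ} {y : ℝ} (hy : y ∈ Kset V N) : y < 1 := by
  have h := grid_sep V hy (N + 1) (by omega) (2 ^ (N + 1)) le_rfl
  have h2 : ((2 ^ (N + 1) : ℕ) : ℝ) * ((2:ℝ) ^ (N + 1))⁻¹ = 1 := by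
    push_cast
    exact mul_inv_cancel₀ (by positivity)
  rw [h2] at h
  rcases lt_or_ge y 1 with h' | h'
  · exact h'
  · exfalso
    have hy1 : y = 1 := le_antisymm hy.1.2 h'
    rw [hy1, sub_self, abs_zero] at h
    exact absurd h (not_lt.mpr (q_pow_nonneg _))

lemma Kset_nonneg {N : ℕ} {y : ℝ} (hy : y ∈ Kset V N) : 0 ≤ y := hy.1.1

lemma good_of_mem_Kset {N : ℕ} {y : ℝ} (hy : y ∈ Kset V N) :
    ∀ l, N < l → ‖P V (e l ⌊(2:ℝ) ^ l * y⌋₊)‖ ≤ q ^ (3 * l) := by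
  intro l hl
  by_contra h
  push_neg at h
  set i := ⌊(2:ℝ) ^ l * y⌋₊ with hi
  have h2l : (0:ℝ) < 2 ^ l := by positivity
  have hy01 : 0 ≤ y := Kset_nonneg V hy
  have hilt : i < 2 ^ l := by
    rw [hi, Nat.floor_lt (by positivity)]
    push_cast
    calc (2:ℝ) ^ l * y < 2 ^ l * 1 := mul_lt_mul_of_pos_left (Kset_lt_one V hy) h2l
      _ = 2 ^ l := mul_one _
  have hmem : i ∈ Bad V l := Finset.mem_filter.mpr ⟨Finset.mem_range.mpr hilt, h⟩
  refine notR_of_mem_Kset V hy l hl (Set.mem_union_left _ ?_)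
  refine Set.mem_biUnion hmem ?_
  constructor
  · calc (i:ℝ) * ((2:ℝ) ^ l)⁻¹ ≤ (2 ^ l * y) * ((2:ℝ) ^ l)⁻¹ :=
        mul_le_mul_of_nonneg_right (Nat.floor_le (by positivity)) (by positivity)
      _ = y := by field_simp
  · calc y = (2 ^ l * y) * ((2:ℝ) ^ l)⁻¹ := by field_simp
      _ < ((i:ℝ) + 1) * ((2:ℝ) ^ l)⁻¹ :=
        mul_lt_mul_of_pos_right (Nat.lt_floor_add_one _) (by positivity)

lemma sep_of_floor_ne {N : ℕ} {s x : ℝ} (hs : s ∈ Kset V N) (hx : x ∈ Kset V N)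
    (hsx : s ≤ x) {l : ℕ} (hl : N < l)
    (hne : ⌊(2:ℝ) ^ l * s⌋₊ ≠ ⌊(2:ℝ) ^ l * x⌋₊) :
    2 * q ^ (10 * l) < x - s := by
  have h2l : (0:ℝ) < 2 ^ l := by positivity
  have hinv : (0:ℝ) < ((2:ℝ) ^ l)⁻¹ := by positivity
  have hcancel : (2:ℝ) ^ l * ((2:ℝ) ^ l)⁻¹ = 1 := mul_inv_cancel₀ h2l.ne'
  have hs0 : (0:ℝ) ≤ s := Kset_nonneg V hs
  set m := ⌊(2:ℝ) ^ l * x⌋₊ with hm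
  have hmono : ⌊(2:ℝ) ^ l * s⌋₊ ≤ m := Nat.floor_le_floor (by nlinarith)
  have hlt : ⌊(2:ℝ) ^ l * s⌋₊ < m := lt_of_le_of_ne hmono hne
  have hmle : (m:ℝ) ≤ 2 ^ l * x := Nat.floor_le (by nlinarith)
  have hslt : 2 ^ l * s < (m:ℝ) := by
    have h1 : 2 ^ l * s < (⌊(2:ℝ) ^ l * s⌋₊ : ℝ) + 1 := Nat.lt_floor_add_one _
    have h2 : (⌊(2:ℝ) ^ l * s⌋₊ : ℝ) + 1 ≤ (m:ℝ) := by exact_mod_cast Nat.succ_le_of_lt hlt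
    linarith
  have hm2l : m ≤ 2 ^ l := by
    have hx1 : x ≤ 1 := (Kset_lt_one V hx).le
    have h : (2:ℝ) ^ l * x ≤ ((2 ^ l : ℕ) : ℝ) := by push_cast; nlinarith
    calc m ≤ ⌊((2 ^ l : ℕ) : ℝ)⌋₊ := Nat.floor_le_floor h
      _ = 2 ^ l := Nat.floor_natCast _
  have hsp : s < (m:ℝ) * ((2:ℝ) ^ l)⁻¹ := by
    have h := mul_lt_mul_of_pos_right hslt hinv
    rwa [mul_comm ((2:ℝ) ^ l) s, mul_assoc, hcancel, mul_one] at h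
  have hpx : (m:ℝ) * ((2:ℝ) ^ l)⁻¹ ≤ x := by
    have h := mul_le_mul_of_nonneg_right hmle hinv.le
    rwa [mul_comm ((2:ℝ) ^ l) x, mul_assoc, hcancel, mul_one] at h
  have hsepS := grid_sep V hs l hl m hm2l
  have hsepX := grid_sep V hx l hl m hm2l
  have h1 : q ^ (10 * l) < (m:ℝ) * ((2:ℝ) ^ l)⁻¹ - s := by
    rwa [abs_sub_comm, abs_of_pos (by linarith)] at hsepS
  have h2 : q ^ (10 * l) < x - (m:ℝ) * ((2:ℝ) ^ l)⁻¹ := by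
    rcases eq_or_lt_of_le hpx with heq | hlt'
    · exfalso
      rw [← heq, sub_self, abs_zero] at hsepX
      exact absurd hsepX (not_lt.mpr (q_pow_nonneg _))
    · rwa [abs_of_pos (by linarith)] at hsepX
  linarith

lemma floor_eq_low {N j : ℕ} (hj1 : j + 1 ≤ 2 ^ N) {s x : ℝ}
    (hsK : s ∈ Kset V N) (hxK : x ∈ Kset V N)
    (hsl : (j:ℝ) * ((2:ℝ) ^ N)⁻¹ ≤ s) (hxu : x ≤ ((j:ℝ) + 1) * ((2:ℝ) ^ N)⁻¹)
    (hsx : s ≤ x) {l : ℕ} (hl : l ≤ N) :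
    ⌊(2:ℝ) ^ l * s⌋₊ = ⌊(2:ℝ) ^ l * x⌋₊ := by
  by_contra hne
  have h2l : (0:ℝ) < 2 ^ l := by positivity
  have h2N : (0:ℝ) < 2 ^ N := by positivity
  have hinvN : (0:ℝ) < ((2:ℝ) ^ N)⁻¹ := by positivity
  have hs0 : (0:ℝ) ≤ s := Kset_nonneg V hsK
  set m := ⌊(2:ℝ) ^ l * x⌋₊ with hm
  have hmono : ⌊(2:ℝ) ^ l * s⌋₊ ≤ m := Nat.floor_le_floor (by nlinarith)
  have hlt : ⌊(2:ℝ) ^ l * s⌋₊ < m := lt_of_le_of_ne hmono hne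
  have hmle : (m:ℝ) ≤ 2 ^ l * x := Nat.floor_le (by nlinarith)
  have hslt : 2 ^ l * s < (m:ℝ) := by
    have h1 : 2 ^ l * s < (⌊(2:ℝ) ^ l * s⌋₊ : ℝ) + 1 := Nat.lt_floor_add_one _
    have h2 : (⌊(2:ℝ) ^ l * s⌋₊ : ℝ) + 1 ≤ (m:ℝ) := by exact_mod_cast Nat.succ_le_of_lt hlt
    linarith
  set a : ℕ := m * 2 ^ (N - l) with ha
  have hpow : (2:ℝ) ^ (N - l) * (2:ℝ) ^ l = (2:ℝ) ^ N := by
    rw [← pow_add, Nat.sub_add_cancel hl]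
  have hkey : (2:ℝ) ^ (N - l) * ((2:ℝ) ^ N)⁻¹ = ((2:ℝ) ^ l)⁻¹ := by
    rw [← hpow]
    field_simp
  have hpeq : (a:ℝ) * ((2:ℝ) ^ N)⁻¹ = (m:ℝ) * ((2:ℝ) ^ l)⁻¹ := by
    rw [ha]
    push_cast
    rw [mul_assoc, hkey]
  have hinvl : (0:ℝ) < ((2:ℝ) ^ l)⁻¹ := by positivity
  have hcancel : (2:ℝ) ^ l * ((2:ℝ) ^ l)⁻¹ = 1 := mul_inv_cancel₀ h2l.ne'
  have hsp : s < (a:ℝ) * ((2:ℝ) ^ N)⁻¹ := by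
    rw [hpeq]
    have h := mul_lt_mul_of_pos_right hslt hinvl
    rwa [mul_comm ((2:ℝ) ^ l) s, mul_assoc, hcancel, mul_one] at h
  have hpx : (a:ℝ) * ((2:ℝ) ^ N)⁻¹ ≤ x := by
    rw [hpeq]
    have h := mul_le_mul_of_nonneg_right hmle hinvl.le
    rwa [mul_comm ((2:ℝ) ^ l) x, mul_assoc, hcancel, mul_one] at h
  have hja : j < a := by
    have h : (j:ℝ) * ((2:ℝ) ^ N)⁻¹ < (a:ℝ) * ((2:ℝ) ^ N)⁻¹ := by linarith
    exact_mod_cast lt_of_mul_lt_mul_right h hinvN.le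
  have haj : a ≤ j + 1 := by
    have h : (a:ℝ) * ((2:ℝ) ^ N)⁻¹ ≤ ((j:ℝ) + 1) * ((2:ℝ) ^ N)⁻¹ := by linarith
    have h2 : (a:ℝ) ≤ (j:ℝ) + 1 := le_of_mul_le_mul_right h hinvN
    exact_mod_cast h2
  have haeq : a = j + 1 := by omega
  have hxeq : x = ((j:ℝ) + 1) * ((2:ℝ) ^ N)⁻¹ := by
    refine le_antisymm hxu ?_
    have : ((j:ℝ) + 1) = (a:ℝ) := by rw [haeq]; push_cast; ring
    rw [this]
    exact hpx
  have hi0 : 2 * (j + 1) ≤ 2 ^ (N + 1) := by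
    have h : 2 ^ (N + 1) = 2 ^ N * 2 := pow_succ 2 N
    omega
  have hcenter : ((2 * (j + 1) : ℕ) : ℝ) * ((2:ℝ) ^ (N + 1))⁻¹
      = ((j:ℝ) + 1) * ((2:ℝ) ^ N)⁻¹ := by
    push_cast
    rw [pow_succ]
    field_simp
  have h := grid_sep V hxK (N + 1) (by omega) (2 * (j + 1)) hi0
  rw [hcenter, ← hxeq, sub_self, abs_zero] at h
  exact absurd h (not_lt.mpr (q_pow_nonneg _))

lemma key_estimate {N j : ℕ} (hj1 : j + 1 ≤ 2 ^ N) {s x : ℝ}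
    (hsK : s ∈ Kset V N) (hxK : x ∈ Kset V N)
    (hsl : (j:ℝ) * ((2:ℝ) ^ N)⁻¹ ≤ s) (hxu : x ≤ ((j:ℝ) + 1) * ((2:ℝ) ^ N)⁻¹)
    (hsx : s ≤ x) :
    ‖P V (necklaceMap x) - P V (necklaceMap s)‖
      ≤ (q ^ (N + 1) * (1 - q)⁻¹) * (x - s) := by
  classical
  set g : ℕ → ℝ := fun k => if N ≤ k then (x - s) * q ^ (k + 1) else 0 with hg
  have hg_nonneg : ∀ k, 0 ≤ g k := by
    intro k
    rw [hg]
    dsimp only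
    split
    · exact mul_nonneg (by linarith) (q_pow_nonneg _)
    · exact le_rfl
  have hterm : ∀ k : ℕ, ‖P V (F x k) - P V (F s k)‖ ≤ g k := by
    intro k
    by_cases hfl : ⌊(2:ℝ) ^ (k + 1) * s⌋₊ = ⌊(2:ℝ) ^ (k + 1) * x⌋₊
    · have hFeq : F x k = F s k := by rw [F, F, hfl]
      rw [hFeq, sub_self, norm_zero]
      exact hg_nonneg k
    · have hNk : N ≤ k := by
        by_contra hc
        push_neg at hc
        exact hfl (floor_eq_low V hj1 hsK hxK hsl hxu hsx (by omega))
      have hgval : g k = (x - s) * q ^ (k + 1) := if_pos hNk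
      rw [hgval]
      set l := k + 1 with hldef
      set w : Ell2 := P V (e l ⌊(2:ℝ) ^ l * x⌋₊) - P V (e l ⌊(2:ℝ) ^ l * s⌋₊) with hw
      have hP : P V (F x k) - P V (F s k) = ((2:ℝ) ^ l)⁻¹ • w := by
        rw [hw, F, F, _root_.map_smul, _root_.map_smul, smul_sub]
      have hwle : ‖w‖ ≤ q ^ (3 * l) + q ^ (3 * l) := by
        rw [hw]
        refine le_trans (norm_sub_le _ _) ?_
        exact add_le_add (good_of_mem_Kset V hxK l (by omega))
          (good_of_mem_Kset V hsK l (by omega))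
      have hnorm : ‖P V (F x k) - P V (F s k)‖
          ≤ ((2:ℝ) ^ l)⁻¹ * (2 * q ^ (3 * l)) := by
        rw [hP, norm_smul, Real.norm_eq_abs, abs_of_nonneg (by positivity)]
        calc ((2:ℝ) ^ l)⁻¹ * ‖w‖ ≤ ((2:ℝ) ^ l)⁻¹ * (q ^ (3 * l) + q ^ (3 * l)) :=
              mul_le_mul_of_nonneg_left hwle (by positivity)
          _ = ((2:ℝ) ^ l)⁻¹ * (2 * q ^ (3 * l)) := by ring
      have hsep : 2 * q ^ (10 * l) < x - s :=
        sep_of_floor_ne V hsK hxK hsx (by omega) hfl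
      calc ‖P V (F x k) - P V (F s k)‖ ≤ ((2:ℝ) ^ l)⁻¹ * (2 * q ^ (3 * l)) := hnorm
        _ = q ^ l * (2 * q ^ (10 * l)) := by
            rw [two_pow_inv]
            rw [show (8:ℕ) * l = l + (7 * l) by ring, pow_add,
              show (10:ℕ) * l = 7 * l + 3 * l by ring, pow_add]
            ring
        _ ≤ q ^ l * (x - s) := mul_le_mul_of_nonneg_left hsep.le (q_pow_nonneg _)
        _ = (x - s) * q ^ (k + 1) := by rw [hldef, mul_comm]
  have hg0 : HasSum (fun k : ℕ => if N ≤ k then q ^ (k + 1) else 0)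
      (q ^ (N + 1) * (1 - q)⁻¹) := by
    have h1 : HasSum (fun m : ℕ => q ^ (N + 1) * q ^ m) (q ^ (N + 1) * (1 - q)⁻¹) :=
      (hasSum_geometric_of_lt_one q_pos.le q_lt_one).mul_left _
    have hinj : Function.Injective (fun m : ℕ => N + m) := fun a b h => by simpa using h
    have hcomp : ((fun k : ℕ => if N ≤ k then q ^ (k + 1) else 0) ∘ (fun m : ℕ => N + m))
        = fun m : ℕ => q ^ (N + 1) * q ^ m := by
      funext m
      simp only [Function.comp]
      rw [if_pos (Nat.le_add_right N m), ← pow_add]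
      congr 1
      omega
    refine (Function.Injective.hasSum_iff hinj ?_).mp (by rw [hcomp]; exact h1)
    intro k hk
    have hkN : ¬ N ≤ k := by
      intro hc
      exact hk ⟨k - N, by show N + (k - N) = k; omega⟩
    exact if_neg hkN
  have hgsum : HasSum g ((x - s) * (q ^ (N + 1) * (1 - q)⁻¹)) := by
    have h := hg0.mul_left (x - s)
    have hfun : (fun k : ℕ => (x - s) * (if N ≤ k then q ^ (k + 1) else 0)) = g := by
      funext k
      rw [hg]
      dsimp only
      rw [mul_ite, mul_zero]
    rwa [hfun] at h
  have hnormsum : Summable (fun k => ‖P V (F x k) - P V (F s k)‖) :=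
    Summable.of_nonneg_of_le (fun k => norm_nonneg _) hterm hgsum.summable
  rw [P_diff]
  calc ‖∑' k, (P V (F x k) - P V (F s k))‖
      ≤ ∑' k, ‖P V (F x k) - P V (F s k)‖ := norm_tsum_le_tsum_norm hnormsum
    _ ≤ ∑' k, g k := Summable.tsum_le_tsum hterm hnormsum hgsum.summable
    _ = (x - s) * (q ^ (N + 1) * (1 - q)⁻¹) := hgsum.tsum_eq
    _ = (q ^ (N + 1) * (1 - q)⁻¹) * (x - s) := mul_comm _ _

end NecklaceAux

open NecklaceAux

/-- **Piecewise-Lipschitz projections of the self-similar curve.**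
For every finite-dimensional subspace `V ≤ ℓ²(ℕ²)` and every `ε > 0`, there is a Borel set
`K ⊆ [0,1]` with `λ([0,1] \ K) ≤ ε` such that `π_V ∘ f` restricted to `K` is piecewise
`ε`-Lipschitz: `[0,1]` decomposes into finitely many intervals on each of which
`π_V ∘ f` restricted to `K` is `ε`-Lipschitz. -/
theorem piecewise_lipschitz_projection
    (V : Submodule ℝ Ell2) [FiniteDimensional ℝ V] (ε : ℝ) (hε : 0 < ε) :
    ∃ K ⊆ Set.Icc (0 : ℝ) 1, MeasurableSet K ∧
      volume (Set.Icc (0 : ℝ) 1 \ K) ≤ ENNReal.ofReal ε ∧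
      ∃ (n : ℕ) (t : Fin (n + 1) → ℝ), Monotone t ∧ t 0 = 0 ∧ t (Fin.last n) = 1 ∧
        ∀ j : Fin n,
          LipschitzOnWith ε.toNNReal
            (fun s => (V.orthogonalProjectionOnto (necklaceMap s) : Ell2))
            (K ∩ Set.Icc (t j.castSucc) (t j.succ)) := by
  classical
  set D : ℝ := (Module.finrank ℝ V : ℝ) with hD
  have hD0 : 0 ≤ D := Nat.cast_nonneg _
  have h1q : 0 < 1 - q := by linarith [q_lt_one]
  obtain ⟨N, hN⟩ : ∃ N : ℕ, q ^ (N + 1) ≤ ε * (1 - q) / (D + 5) := by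
    obtain ⟨n, hn⟩ := exists_pow_lt_of_lt_one
      (show (0:ℝ) < ε * (1 - q) / (D + 5) by positivity) q_lt_one
    exact ⟨n, le_trans (pow_le_pow_of_le_one q_pos.le q_le_one (by omega)) hn.le⟩
  have hNq : q ^ (N + 1) * (1 - q)⁻¹ ≤ ε / (D + 5) := by
    rw [div_eq_mul_inv] at hN ⊢
    calc q ^ (N + 1) * (1 - q)⁻¹ ≤ ε * (1 - q) * (D + 5)⁻¹ * (1 - q)⁻¹ := by
          exact mul_le_mul_of_nonneg_right hN (by positivity)
      _ = ε * (D + 5)⁻¹ * ((1 - q) * (1 - q)⁻¹) := by ring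
      _ = ε * (D + 5)⁻¹ := by rw [mul_inv_cancel₀ h1q.ne', mul_one]
  have hNe : q ^ (N + 1) * (1 - q)⁻¹ ≤ ε := by
    refine le_trans hNq ?_
    exact div_le_self hε.le (by linarith)
  refine ⟨Kset V N, Set.diff_subset, Kset_meas V N, ?_, 2 ^ N,
    fun j => ((j : ℕ) : ℝ) * ((2:ℝ) ^ N)⁻¹, ?_, ?_, ?_, ?_⟩
  · -- measure bound
    have hsub : Set.Icc (0:ℝ) 1 \ Kset V N ⊆ Uset V N := by
      intro y hy
      rcases hy with ⟨hy1, hy2⟩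
      by_contra h
      exact hy2 ⟨hy1, h⟩
    refine le_trans (measure_mono hsub) (le_trans (Uset_vol V N) ?_)
    apply ENNReal.ofReal_le_ofReal
    have hq2N : q ^ (2 * (N + 1)) ≤ q ^ (N + 1) :=
      pow_le_pow_of_le_one q_pos.le q_le_one (by omega)
    have h1q2 : 0 < 1 - q ^ 2 := by nlinarith [q_pos, q_lt_one]
    have hinv : (1 - q ^ 2)⁻¹ ≤ (1 - q)⁻¹ := by
      apply inv_anti₀ h1q
      nlinarith [q_pos, q_le_one]
    calc (D + 4) * (q ^ (2 * (N + 1)) * (1 - q ^ 2)⁻¹)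
        ≤ (D + 4) * (q ^ (N + 1) * (1 - q)⁻¹) := by
          refine mul_le_mul_of_nonneg_left ?_ (by linarith)
          exact mul_le_mul hq2N hinv (by positivity) (q_pow_nonneg _)
      _ ≤ (D + 4) * (ε / (D + 5)) := mul_le_mul_of_nonneg_left hNq (by linarith)
      _ ≤ ε := by
          rw [div_eq_mul_inv, show (D + 4) * (ε * (D + 5)⁻¹) = ε * ((D + 4) * (D + 5)⁻¹) by ring]
          have h5 : (0:ℝ) < D + 5 := by linarith
          have h45 : (D + 4) * (D + 5)⁻¹ ≤ 1 := by
            rw [← div_eq_mul_inv, div_le_one h5]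
            linarith
          nlinarith
  · -- monotone
    intro a b hab
    have h : ((a : ℕ) : ℝ) ≤ ((b : ℕ) : ℝ) := Nat.cast_le.mpr hab
    exact mul_le_mul_of_nonneg_right h (by positivity)
  · simp
  · -- t last = 1
    simp only [Fin.val_last]
    push_cast
    exact mul_inv_cancel₀ (by positivity)
  · -- Lipschitz
    intro j
    have hj1 : (j : ℕ) + 1 ≤ 2 ^ N := j.isLt
    have hcs : ((j.castSucc : ℕ) : ℝ) = ((j : ℕ) : ℝ) := by
      rw [Fin.coe_castSucc]
    have hsc : ((j.succ : ℕ) : ℝ) = ((j : ℕ) : ℝ) + 1 := by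
      rw [Fin.val_succ]
      push_cast
      ring
    apply LipschitzOnWith.of_dist_le_mul
    intro a ha b hb
    have hcoe : (ε.toNNReal : ℝ) = ε := Real.coe_toNNReal _ hε.le
    rw [hcoe]
    have haK : a ∈ Kset V N := ha.1
    have hbK : b ∈ Kset V N := hb.1
    have hal : ((j : ℕ) : ℝ) * ((2:ℝ) ^ N)⁻¹ ≤ a := by
      have h := ha.2.1
      simp only [Fin.coe_castSucc] at h
      exact h
    have hau : a ≤ (((j : ℕ) : ℝ) + 1) * ((2:ℝ) ^ N)⁻¹ := by
      have h := ha.2.2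
      simp only [Fin.val_succ] at h
      push_cast at h
      exact h
    have hbl : ((j : ℕ) : ℝ) * ((2:ℝ) ^ N)⁻¹ ≤ b := by
      have h := hb.2.1
      simp only [Fin.coe_castSucc] at h
      exact h
    have hbu : b ≤ (((j : ℕ) : ℝ) + 1) * ((2:ℝ) ^ N)⁻¹ := by
      have h := hb.2.2
      simp only [Fin.val_succ] at h
      push_cast at h
      exact h
    have hPf : ∀ y : ℝ, (V.orthogonalProjectionOnto (necklaceMap y) : Ell2)
        = P V (necklaceMap y) := fun y => rfl
    rcases le_total a b with hab | hab
    · have hkey := key_estimate V hj1 haK hbK hal hbu hab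
      rw [dist_eq_norm, hPf, hPf, Real.dist_eq, abs_of_nonpos (by linarith), norm_sub_rev]
      calc ‖P V (necklaceMap b) - P V (necklaceMap a)‖
          ≤ (q ^ (N + 1) * (1 - q)⁻¹) * (b - a) := hkey
        _ ≤ ε * (b - a) := mul_le_mul_of_nonneg_right hNe (by linarith)
        _ = ε * -(a - b) := by ring
    · have hkey := key_estimate V hj1 hbK haK hbl hau hab
      rw [dist_eq_norm, hPf, hPf, Real.dist_eq, abs_of_nonneg (by linarith)]
      calc ‖P V (necklaceMap a) - P V (necklaceMap b)‖
          ≤ (q ^ (N + 1) * (1 - q)⁻¹) * (a - b) := hkey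
        _ ≤ ε * (a - b) := mul_le_mul_of_nonneg_right hNe (by linarith)


end
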